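/- The Yule-Walker system A h = -b, where A_{p,q} = f̂(p - q) (p,q ∈ {0,...,K-1}) and b = (f̂(1),...,f̂(K))^T, with f̂(λ) = Σ_{k=0}^{K-1} a_k u_k^λ for distinct nonzero u_k and nonzero a_k, has a unique solution h ∈ ℂ^K, and this solution gives the coefficients h(1),...,h(K) of the monic annihilating polynomial Π_k (z - u_k) = z^K + h(1) z^{K-1} + ... + h(K). -/

import Mathlib

open Complex Matrix Polynomial

/-- The Yule-Walker system A h = -b has a unique solution, given by the coefficients
of the monic annihilating polynomial ∏ (z - u_k). -/
theorem stmt8 (K : ℕ) (hK : 1 ≤ K)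
    (u : Fin K → ℂ) (hu : ∀ k, u k ≠ 0) (hdist : Function.Injective u)
    (a : Fin K → ℂ) (ha : ∀ k, a k ≠ 0)
    (A : Matrix (Fin K) (Fin K) ℂ)
    (hA : ∀ p q : Fin K, A p q = ∑ k, a k * u k ^ (((p : ℕ) : ℤ) - ((q : ℕ) : ℤ)))
    (b : Fin K → ℂ)
    (hb : ∀ p : Fin K, b p = ∑ k, a k * u k ^ (((p : ℕ) : ℤ) + 1)) :
    (∃! h : Fin K → ℂ, A.mulVec h = -b) ∧
      A.mulVec (fun q : Fin K =>
        (∏ k, (Polynomial.X - Polynomial.C (u k))).coeff (K - 1 - (q : ℕ))) = -b := by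
  set P : Polynomial ℂ := ∏ k, (Polynomial.X - Polynomial.C (u k)) with hP
  have hmonic : P.Monic := monic_prod_of_monic _ _ fun k _ => monic_X_sub_C _
  have hdeg : P.natDegree = K := by
    rw [hP, natDegree_prod _ _ fun k _ => X_sub_C_ne_zero _]
    simp
  have hcoeffK : P.coeff K = 1 := by
    have := hmonic.coeff_natDegree
    rwa [hdeg] at this
  -- sum of lower coefficients at a root
  have hsum : ∀ k : Fin K, (∑ j : Fin K, P.coeff (j : ℕ) * u k ^ (j : ℕ)) = -u k ^ K := by
    intro k
    have heval : P.eval (u k) = 0 := by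
      rw [hP, eval_prod]
      exact Finset.prod_eq_zero (Finset.mem_univ k) (by simp)
    have h1 : P.eval (u k) = ∑ i ∈ Finset.range (K + 1), P.coeff i * u k ^ i := by
      rw [eval_eq_sum_range, hdeg]
    rw [Finset.sum_range_succ, hcoeffK, one_mul] at h1
    have h2 : (∑ j : Fin K, P.coeff (j : ℕ) * u k ^ (j : ℕ))
        = ∑ i ∈ Finset.range K, P.coeff i * u k ^ i :=
      Fin.sum_univ_eq_sum_range (fun i => P.coeff i * u k ^ i) K
    rw [h2]
    have := h1.symm.trans heval
    linear_combination this
  -- the key computation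
  have key : A.mulVec (fun q : Fin K => P.coeff (K - 1 - (q : ℕ))) = -b := by
    funext p
    simp only [Matrix.mulVec, dotProduct]
    have hterm : ∀ q : Fin K,
        A p q * P.coeff (K - 1 - (q : ℕ))
          = ∑ k, a k * (u k ^ (((p : ℕ) : ℤ) - ((q : ℕ) : ℤ)) * P.coeff (K - 1 - (q : ℕ))) := by
      intro q
      rw [hA, Finset.sum_mul]
      congr 1; funext k; ring
    rw [Finset.sum_congr rfl fun q _ => hterm q, Finset.sum_comm]
    have hinner : ∀ k : Fin K,
        (∑ q : Fin K, a k * (u k ^ (((p : ℕ) : ℤ) - ((q : ℕ) : ℤ)) * P.coeff (K - 1 - (q : ℕ))))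
          = -(a k * u k ^ (((p : ℕ) : ℤ) + 1)) := by
      intro k
      rw [← Finset.mul_sum]
      have hrev : (∑ q : Fin K, u k ^ (((p : ℕ) : ℤ) - ((q : ℕ) : ℤ)) * P.coeff (K - 1 - (q : ℕ)))
          = ∑ j : Fin K, u k ^ (((p : ℕ) : ℤ) - (((j.rev : ℕ) : ℤ))) * P.coeff (K - 1 - ((j.rev : ℕ))) := by
        exact (Fintype.sum_bijective Fin.rev Fin.rev_bijective _ _ fun j => rfl).symm
      rw [hrev]
      have hstep : ∀ j : Fin K,
          u k ^ (((p : ℕ) : ℤ) - (((j.rev : ℕ) : ℤ))) * P.coeff (K - 1 - ((j.rev : ℕ)))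
            = u k ^ (((p : ℕ) : ℤ) + 1 - (K : ℤ)) * (P.coeff (j : ℕ) * u k ^ (j : ℕ)) := by
        intro j
        have hjlt : (j : ℕ) < K := j.isLt
        have hrevval : ((j.rev : ℕ)) = K - 1 - (j : ℕ) := by rw [Fin.val_rev]; omega
        have hcoe : (((j.rev : ℕ)) : ℤ) = (K : ℤ) - 1 - (j : ℕ) := by
          rw [hrevval]
          have h1 : (j : ℕ) ≤ K - 1 := Nat.le_sub_one_of_lt hjlt
          push_cast [Nat.cast_sub h1, Nat.cast_sub hK]
          ring
        have hKj : K - 1 - ((j.rev : ℕ)) = (j : ℕ) := by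
          rw [hrevval]
          omega
        rw [hcoe, hKj]
        have hexp : ((p : ℕ) : ℤ) - ((K : ℤ) - 1 - (j : ℕ))
            = (((p : ℕ) : ℤ) + 1 - (K : ℤ)) + ((j : ℕ) : ℤ) := by ring
        rw [hexp, zpow_add₀ (hu k), zpow_natCast]
        ring
      rw [Finset.sum_congr rfl fun j _ => hstep j, ← Finset.mul_sum, hsum k]
      have : u k ^ (((p : ℕ) : ℤ) + 1 - (K : ℤ)) * u k ^ K
          = u k ^ (((p : ℕ) : ℤ) + 1) := by
        rw [← zpow_natCast (u k) K, ← zpow_add₀ (hu k)]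
        ring_nf
      rw [mul_neg, this]
      ring
    rw [Finset.sum_congr rfl fun k _ => hinner k]
    simp [hb]
  refine ⟨?_, key⟩
  -- invertibility of A
  have hAfac : A = (Matrix.vandermonde u)ᵀ * (Matrix.diagonal a * Matrix.vandermonde fun k => (u k)⁻¹) := by
    funext p q
    rw [hA, Matrix.mul_apply]
    refine Finset.sum_congr rfl fun k _ => ?_
    have hdiag : (Matrix.diagonal a * Matrix.vandermonde fun k => (u k)⁻¹) k q
        = a k * ((u k)⁻¹) ^ (q : ℕ) := by
      rw [Matrix.mul_apply, Finset.sum_eq_single k]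
      · simp [Matrix.vandermonde]
      · intro m _ hmk
        simp [Matrix.diagonal_apply_ne _ (Ne.symm hmk)]
      · simp
    rw [hdiag, Matrix.transpose_apply]
    simp only [Matrix.vandermonde, Matrix.of_apply]
    rw [zpow_sub₀ (hu k), zpow_natCast, zpow_natCast, inv_pow]
    field_simp
  have hvdm : ∀ v : Fin K → ℂ, Function.Injective v → (Matrix.vandermonde v).det ≠ 0 := by
    intro v hv
    rw [Matrix.det_vandermonde]
    refine Finset.prod_ne_zero_iff.2 fun i _ => Finset.prod_ne_zero_iff.2 fun j hj => ?_
    rw [Finset.mem_Ioi] at hj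
    exact sub_ne_zero_of_ne fun h => ne_of_gt hj (hv h)
  have hdet : A.det ≠ 0 := by
    rw [hAfac, Matrix.det_mul, Matrix.det_mul, Matrix.det_transpose, Matrix.det_diagonal]
    exact mul_ne_zero (hvdm u hdist)
      (mul_ne_zero (Finset.prod_ne_zero_iff.2 fun k _ => ha k)
        (hvdm _ fun i j h => hdist (inv_injective h)))
  have : Invertible A := A.invertibleOfIsUnitDet (Ne.isUnit hdet)
  exact ⟨_, key, fun y hy => Matrix.mulVec_injective_of_invertible A (hy.trans key.symm)⟩
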